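/- Let G be a connected simple graph of order n ≥ 1. Then the distinguishing index of the middle graph satisfies D'(M(G)) ≤ 3. -/

import Mathlib

open SimpleGraph

/-- The subdivision graph `S(G)`: each edge `{u,v}` of `G` is replaced by a new
vertex (the element of `G.edgeSet`) adjacent to both `u` and `v`. -/
def subdivisionGraph {V : Type*} (G : SimpleGraph V) : SimpleGraph (V ⊕ G.edgeSet) where
  Adj x y :=
    match x, y with
    | Sum.inl u, Sum.inr e => u ∈ (e : Sym2 V)
    | Sum.inr e, Sum.inl u => u ∈ (e : Sym2 V)
    | _, _ => False
  symm := ⟨by rintro (u | e) (v | f) h <;> simp_all⟩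
  loopless := ⟨by rintro (u | e) h <;> simp_all⟩

/-- The central graph `C(G)`: obtained from the subdivision graph `S(G)` by joining
every pair of distinct vertices of `G` that are non-adjacent in `G`. -/
def centralGraph {V : Type*} (G : SimpleGraph V) : SimpleGraph (V ⊕ G.edgeSet) where
  Adj x y :=
    match x, y with
    | Sum.inl u, Sum.inl v => u ≠ v ∧ ¬ G.Adj u v
    | Sum.inl u, Sum.inr e => u ∈ (e : Sym2 V)
    | Sum.inr e, Sum.inl u => u ∈ (e : Sym2 V)
    | Sum.inr _, Sum.inr _ => False
  symm := by
    refine ⟨?_⟩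
    rintro (u | e) (v | f) h
    · exact ⟨h.1.symm, fun a => h.2 a.symm⟩
    · exact h
    · exact h
    · exact h
  loopless := by
    refine ⟨?_⟩
    rintro (u | e) h
    · exact h.1 rfl
    · exact h

/-- The middle graph `M(G)`: obtained from the subdivision graph `S(G)` by joining
each pair of distinct subdivided vertices corresponding to adjacent edges of `G`. -/
def middleGraph {V : Type*} (G : SimpleGraph V) : SimpleGraph (V ⊕ G.edgeSet) where
  Adj x y :=
    match x, y with
    | Sum.inl u, Sum.inr e => u ∈ (e : Sym2 V)
    | Sum.inr e, Sum.inl u => u ∈ (e : Sym2 V)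
    | Sum.inr e, Sum.inr f => e ≠ f ∧ ∃ u, u ∈ (e : Sym2 V) ∧ u ∈ (f : Sym2 V)
    | Sum.inl _, Sum.inl _ => False
  symm := by
    refine ⟨?_⟩
    rintro (u | e) (v | f) h
    · exact h
    · exact h
    · exact h
    · exact ⟨h.1.symm, h.2.imp fun u hu => ⟨hu.2, hu.1⟩⟩
  loopless := by
    refine ⟨?_⟩
    rintro (u | e) h
    · exact h
    · exact h.1 rfl

/-- The line graph `L(G)`: vertices are the edges of `G`, two distinct edges being
adjacent when they share an endpoint. -/
def lineG {V : Type*} (G : SimpleGraph V) : SimpleGraph G.edgeSet where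
  Adj e f := e ≠ f ∧ ∃ u, u ∈ (e : Sym2 V) ∧ u ∈ (f : Sym2 V)
  symm := ⟨fun e f h => ⟨h.1.symm, h.2.imp fun u hu => ⟨hu.2, hu.1⟩⟩⟩
  loopless := ⟨fun e h => h.1 rfl⟩

/-- The endline graph `G⁺`: to each vertex `v` of `G` we attach a new pendant
vertex; `Sum.inl` is the copy of `V(G)` and `Sum.inr` are the new vertices. -/
def endlineGraph {V : Type*} (G : SimpleGraph V) : SimpleGraph (V ⊕ V) where
  Adj x y :=
    match x, y with
    | Sum.inl u, Sum.inl v => G.Adj u v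
    | Sum.inl u, Sum.inr v => u = v
    | Sum.inr u, Sum.inl v => u = v
    | Sum.inr _, Sum.inr _ => False
  symm := by
    refine ⟨?_⟩
    rintro (u | u) (v | v) h
    · exact h.symm
    · exact h.symm
    · exact h.symm
    · exact h
  loopless := by
    refine ⟨?_⟩
    rintro (u | u) h
    · exact G.irrefl h
    · exact h

/-- The join `G₁ + G₂` of two vertex-disjoint graphs: their disjoint union together
with all edges between the two vertex sets. -/
def joinGraph {V₁ V₂ : Type*} (G₁ : SimpleGraph V₁) (G₂ : SimpleGraph V₂) :
    SimpleGraph (V₁ ⊕ V₂) where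
  Adj x y :=
    match x, y with
    | Sum.inl u, Sum.inl v => G₁.Adj u v
    | Sum.inr u, Sum.inr v => G₂.Adj u v
    | Sum.inl _, Sum.inr _ => True
    | Sum.inr _, Sum.inl _ => True
  symm := by
    refine ⟨?_⟩
    rintro (u | u) (v | v) h
    · exact h.symm
    · trivial
    · trivial
    · exact h.symm
  loopless := by
    refine ⟨?_⟩
    rintro (u | u) h
    · exact G₁.irrefl h
    · exact G₂.irrefl h

/-- The maximum degree `Δ(H)` of a graph (as a supremum of cardinalities of
neighborhoods, which agrees with the usual maximum degree for finite graphs). -/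
noncomputable def maxDeg {W : Type*} (H : SimpleGraph W) : ℕ :=
  sSup {k | ∃ v : W, k = (H.neighborSet v).ncard}

/-- A graph is regular if all vertices have the same degree. -/
def IsRegularGraph {W : Type*} (H : SimpleGraph W) : Prop :=
  ∀ u v : W, (H.neighborSet u).ncard = (H.neighborSet v).ncard

/-- The distinguishing number `D(H)`: the least `d` such that `H` admits a vertex
coloring with `d` colors preserved only by the identity automorphism. -/
noncomputable def distinguishingNumber {W : Type*} (H : SimpleGraph W) : ℕ :=
  sInf {d | ∃ c : W → Fin d, ∀ φ : H ≃g H, (∀ v, c (φ v) = c v) → ∀ v, φ v = v}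

/-- The distinguishing index `D'(H)`: the least `d` such that `H` admits an edge
coloring with `d` colors preserved only by the identity automorphism. -/
noncomputable def distinguishingIndex {W : Type*} (H : SimpleGraph W) : ℕ :=
  sInf {d | ∃ c : H.edgeSet → Fin d,
    ∀ φ : H ≃g H, (∀ e, c (φ.mapEdgeSet e) = c e) → ∀ v, φ v = v}

/-- A proper total coloring of `H` with `d` colors: adjacent vertices, adjacent
edges, and incident vertex/edge pairs receive distinct colors. -/
def IsProperTotalColoring {W : Type*} (H : SimpleGraph W) {d : ℕ}
    (f : W ⊕ H.edgeSet → Fin d) : Prop :=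
  (∀ u v : W, H.Adj u v → f (Sum.inl u) ≠ f (Sum.inl v)) ∧
  (∀ e e' : H.edgeSet, e ≠ e' → (∃ u, u ∈ (e : Sym2 W) ∧ u ∈ (e' : Sym2 W)) →
    f (Sum.inr e) ≠ f (Sum.inr e')) ∧
  (∀ (v : W) (e : H.edgeSet), v ∈ (e : Sym2 W) → f (Sum.inl v) ≠ f (Sum.inr e))

/-- An automorphism `φ` preserves a total coloring `f`. -/
def PreservesTotalColoring {W : Type*} (H : SimpleGraph W) {d : ℕ}
    (f : W ⊕ H.edgeSet → Fin d) (φ : H ≃g H) : Prop :=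
  (∀ v : W, f (Sum.inl (φ v)) = f (Sum.inl v)) ∧
  (∀ e : H.edgeSet, f (Sum.inr (φ.mapEdgeSet e)) = f (Sum.inr e))

/-- The total chromatic number `χ''(H)`. -/
noncomputable def totalChromaticNumber {W : Type*} (H : SimpleGraph W) : ℕ :=
  sInf {d | ∃ f : W ⊕ H.edgeSet → Fin d, IsProperTotalColoring H f}

/-- The total distinguishing chromatic number `χ''_D(H)`: the least `d` such that
`H` has a proper total coloring with `d` colors preserved only by the identity. -/
noncomputable def totalDistinguishingChromaticNumber {W : Type*} (H : SimpleGraph W) : ℕ :=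
  sInf {d | ∃ f : W ⊕ H.edgeSet → Fin d, IsProperTotalColoring H f ∧
    ∀ φ : H ≃g H, PreservesTotalColoring H f φ → ∀ v, φ v = v}

/-- The color class `C_H(u)` of a vertex under a total coloring: the color of `u`
together with the colors of the edges incident to `u`. -/
def totalColorClass {W : Type*} (H : SimpleGraph W) {d : ℕ}
    (f : W ⊕ H.edgeSet → Fin d) (u : W) : Set (Fin d) :=
  {f (Sum.inl u)} ∪ {x | ∃ e : H.edgeSet, u ∈ (e : Sym2 W) ∧ x = f (Sum.inr e)}

/-- An AVD-total coloring: a proper total coloring in which adjacent vertices have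
distinct color classes. -/
def IsAVDTotalColoring {W : Type*} (H : SimpleGraph W) {d : ℕ}
    (f : W ⊕ H.edgeSet → Fin d) : Prop :=
  IsProperTotalColoring H f ∧
  ∀ u v : W, H.Adj u v → totalColorClass H f u ≠ totalColorClass H f v

/-- The AVD-total chromatic number `χ''ₐ(H)`. -/
noncomputable def avdTotalChromaticNumber {W : Type*} (H : SimpleGraph W) : ℕ :=
  sInf {d | ∃ f : W ⊕ H.edgeSet → Fin d, IsAVDTotalColoring H f}

/-- A total dominator coloring: a proper vertex coloring such that every vertex is
adjacent to every vertex of some (nonempty) color class. -/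
def IsTotalDominatorColoring {W : Type*} (H : SimpleGraph W) {d : ℕ}
    (c : W → Fin d) : Prop :=
  (∀ u v : W, H.Adj u v → c u ≠ c v) ∧
  (∀ v : W, ∃ i : Fin d, (∃ w, c w = i) ∧ ∀ w, c w = i → H.Adj v w)

/-- The total dominator chromatic number `χᵗ_d(H)`. -/
noncomputable def tdChromaticNumber {W : Type*} (H : SimpleGraph W) : ℕ :=
  sInf {d | ∃ c : W → Fin d, IsTotalDominatorColoring H c}

/-! ### Auxiliary material for `stmt_9` -/

section AuxStmt9

variable {V : Type*}

lemma mg_adj_inl_inr {G : SimpleGraph V} {v : V} {e : G.edgeSet} :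
    (middleGraph G).Adj (Sum.inl v) (Sum.inr e) ↔ v ∈ (e : Sym2 V) := Iff.rfl

lemma mg_adj_inr_inr {G : SimpleGraph V} {e f : G.edgeSet} :
    (middleGraph G).Adj (Sum.inr e) (Sum.inr f) ↔
      e ≠ f ∧ ∃ u, u ∈ (e : Sym2 V) ∧ u ∈ (f : Sym2 V) := Iff.rfl

lemma mg_not_adj_inl_inl {G : SimpleGraph V} {u v : V} :
    ¬ (middleGraph G).Adj (Sum.inl u) (Sum.inl v) := fun h => h

/-- Any automorphism of the middle graph maps original vertices to original vertices. -/
lemma mg_inl_to_inl {G : SimpleGraph V} (ψ : middleGraph G ≃g middleGraph G) (v : V) :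
    ∃ v', ψ (Sum.inl v) = Sum.inl v' := by
  rcases hv : ψ (Sum.inl v) with v' | f
  · exact ⟨v', rfl⟩
  · exfalso
    obtain ⟨z, hz⟩ := f
    induction z using Sym2.ind with
    | _ a b =>
      have hab : G.Adj a b := G.mem_edgeSet.mp hz
      have ha : (middleGraph G).Adj (Sum.inl a) (ψ (Sum.inl v)) := by
        rw [hv]; exact Sym2.mem_mk_left a b
      have hb : (middleGraph G).Adj (Sum.inl b) (ψ (Sum.inl v)) := by
        rw [hv]; exact Sym2.mem_mk_right a b
      have ha2 : (middleGraph G).Adj (ψ (ψ.symm (Sum.inl a))) (ψ (Sum.inl v)) := by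
        rwa [ψ.apply_symm_apply]
      have hb2 : (middleGraph G).Adj (ψ (ψ.symm (Sum.inl b))) (ψ (Sum.inl v)) := by
        rwa [ψ.apply_symm_apply]
      have ha' := ψ.map_rel_iff.mp ha2
      have hb' := ψ.map_rel_iff.mp hb2
      rcases hsa : ψ.symm (Sum.inl a) with w | e₁
      · rw [hsa] at ha'; exact mg_not_adj_inl_inl ha'
      rcases hsb : ψ.symm (Sum.inl b) with w | e₂
      · rw [hsb] at hb'; exact mg_not_adj_inl_inl hb'
      rw [hsa] at ha'; rw [hsb] at hb'
      have hv1 : v ∈ (e₁ : Sym2 V) := ha'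
      have hv2 : v ∈ (e₂ : Sym2 V) := hb'
      have hne : e₁ ≠ e₂ := by
        intro hh
        apply hab.ne
        have : ψ.symm (Sum.inl a) = ψ.symm (Sum.inl b) := by rw [hsa, hsb, hh]
        have := ψ.symm.injective this
        exact Sum.inl.inj this
      have hadj12 : (middleGraph G).Adj (Sum.inr e₁) (Sum.inr e₂) := ⟨hne, v, hv1, hv2⟩
      have : (middleGraph G).Adj (ψ (Sum.inr e₁)) (ψ (Sum.inr e₂)) := ψ.map_rel_iff.mpr hadj12
      rw [← hsa, ← hsb, ψ.apply_symm_apply, ψ.apply_symm_apply] at this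
      exact mg_not_adj_inl_inl this

open Classical in
/-- Color of the incidence `(v, z)`. -/
noncomputable def hcolAux [LinearOrder V] (G : SimpleGraph V) (r v : V) (z : Sym2 V) : Fin 3 :=
  if (∃ w, G.Adj v w ∧ z = s(v, w) ∧ ∀ x, G.Adj v x → w ≤ x) then (if v = r then 2 else 1)
  else 0

open Classical in
/-- Color of the edge between two edge-vertices. -/
noncomputable def bcolAux [LinearOrder V] (G : SimpleGraph V) (z z' : Sym2 V) : Fin 3 :=
  if (∃ u w w', G.Adj u w ∧ G.Adj u w' ∧ z = s(u, w) ∧ z' = s(u, w') ∧ w ≠ w' ∧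
      ∀ x, G.Adj u x → ¬(w < x ∧ x < w') ∧ ¬(w' < x ∧ x < w)) then 1
  else 0

lemma bcolAux_symm [LinearOrder V] (G : SimpleGraph V) (z z' : Sym2 V) :
    bcolAux G z z' = bcolAux G z' z := by
  classical
  unfold bcolAux
  refine if_congr ?_ rfl rfl
  constructor
  · rintro ⟨u, w, w', h1, h2, h3, h4, h5, h6⟩
    exact ⟨u, w', w, h2, h1, h4, h3, h5.symm, fun x hx => ⟨(h6 x hx).2, (h6 x hx).1⟩⟩
  · rintro ⟨u, w, w', h1, h2, h3, h4, h5, h6⟩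
    exact ⟨u, w', w, h2, h1, h4, h3, h5.symm, fun x hx => ⟨(h6 x hx).2, (h6 x hx).1⟩⟩

/-- The full (unordered-pair) coloring function on vertices of the middle graph. -/
noncomputable def ccAux [LinearOrder V] (G : SimpleGraph V) (r : V) :
    V ⊕ G.edgeSet → V ⊕ G.edgeSet → Fin 3
  | Sum.inl v, Sum.inr e => hcolAux G r v e
  | Sum.inr e, Sum.inl v => hcolAux G r v e
  | Sum.inr e, Sum.inr f => bcolAux G e f
  | Sum.inl _, Sum.inl _ => 0

lemma ccAux_symm [LinearOrder V] (G : SimpleGraph V) (r : V) :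
    ∀ x y, ccAux G r x y = ccAux G r y x := by
  rintro (v | e) (w | f) <;> simp only [ccAux]
  exact bcolAux_symm G _ _

theorem aux_main_stmt9 {V : Type*} [Fintype V] [LinearOrder V] (G : SimpleGraph V)
    (hconn : G.Connected) (hcard : 2 ≤ Fintype.card V) (r : V) :
    ∃ c : (middleGraph G).edgeSet → Fin 3,
      ∀ φ : middleGraph G ≃g middleGraph G,
        (∀ e, c (φ.mapEdgeSet e) = c e) → ∀ x, φ x = x := by
  classical
  -- every vertex has a neighbor
  have hdeg : ∀ v : V, ∃ w, G.Adj v w := by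
    intro v
    obtain ⟨u, hu⟩ := Fintype.exists_ne_of_one_lt_card (by omega) v
    obtain ⟨p⟩ := hconn.preconnected v u
    cases p with
    | nil => exact absurd rfl hu.symm
    | cons h p => exact ⟨_, h⟩
  have hmin : ∀ v : V, ∃ m, G.Adj v m ∧ ∀ x, G.Adj v x → m ≤ x := by
    intro v
    obtain ⟨w, hw⟩ := hdeg v
    obtain ⟨m, hm, hle⟩ := Finset.exists_min_image (Finset.univ.filter (G.Adj v)) id
      ⟨w, by simp [hw]⟩
    refine ⟨m, by simpa using hm, fun x hx => hle x (by simp [hx])⟩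
  refine ⟨fun e => Sym2.lift ⟨ccAux G r, ccAux_symm G r⟩ e.1, ?_⟩
  intro φ hpres
  have hAdjPres : ∀ x y, (middleGraph G).Adj x y →
      ccAux G r (φ x) (φ y) = ccAux G r x y := by
    intro x y hxy
    have h := hpres ⟨s(x, y), hxy⟩
    simpa [SimpleGraph.Iso.mapEdgeSet, SimpleGraph.Hom.mapEdgeSet, Sym2.map_pair_eq]
      using h
  choose σ hσ using fun v => mg_inl_to_inl φ v
  have hσinj : Function.Injective σ := by
    intro a b hab
    have : φ (Sum.inl a) = φ (Sum.inl b) := by rw [hσ, hσ, hab]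
    exact Sum.inl.inj (φ.injective this)
  have hτex : ∀ e : G.edgeSet, ∃ e', φ (Sum.inr e) = Sum.inr e' := by
    intro e
    rcases he : φ (Sum.inr e) with v | e'
    · exfalso
      obtain ⟨v', hv'⟩ := mg_inl_to_inl φ.symm v
      have h2 := φ.symm_apply_apply (Sum.inr e)
      rw [he, hv'] at h2
      simp at h2
    · exact ⟨e', rfl⟩
  choose τ hτ using hτex
  have hστ : ∀ (a b : V) (e : G.edgeSet), (e : Sym2 V) = s(a, b) → G.Adj a b →
      (↑(τ e) : Sym2 V) = s(σ a, σ b) := by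
    intro a b e hrep hab
    have hadj_a : (middleGraph G).Adj (Sum.inl a) (Sum.inr e) := by
      rw [mg_adj_inl_inr, hrep]; exact Sym2.mem_mk_left a b
    have hadj_b : (middleGraph G).Adj (Sum.inl b) (Sum.inr e) := by
      rw [mg_adj_inl_inr, hrep]; exact Sym2.mem_mk_right a b
    have h1 : (middleGraph G).Adj (φ (Sum.inl a)) (φ (Sum.inr e)) := φ.map_rel_iff.mpr hadj_a
    have h2 : (middleGraph G).Adj (φ (Sum.inl b)) (φ (Sum.inr e)) := φ.map_rel_iff.mpr hadj_b
    rw [hσ, hτ] at h1 h2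
    have hma : σ a ∈ (↑(τ e) : Sym2 V) := h1
    have hmb : σ b ∈ (↑(τ e) : Sym2 V) := h2
    have hne : σ a ≠ σ b := fun hh => hab.ne (hσinj hh)
    exact (Sym2.mem_and_mem_iff hne).mp ⟨hma, hmb⟩
  have hA : ∀ (v : V) (e : G.edgeSet), v ∈ (e : Sym2 V) →
      hcolAux G r (σ v) ↑(τ e) = hcolAux G r v ↑e := by
    intro v e hv
    have h := hAdjPres (Sum.inl v) (Sum.inr e) hv
    rw [hσ, hτ] at h
    exact h
  have hB : ∀ (e f : G.edgeSet), e ≠ f → (∃ u, u ∈ (e : Sym2 V) ∧ u ∈ (f : Sym2 V)) →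
      bcolAux G ↑(τ e) ↑(τ f) = bcolAux G ↑e ↑f := by
    intro e f hne hsh
    have h := hAdjPres (Sum.inr e) (Sum.inr f) ⟨hne, hsh⟩
    rw [hτ, hτ] at h
    exact h
  -- basic facts about the colors
  have hcol_min : ∀ v m, G.Adj v m → (∀ x, G.Adj v x → m ≤ x) →
      hcolAux G r v s(v, m) = if v = r then 2 else 1 := by
    intro v m h hm
    unfold hcolAux
    rw [if_pos ⟨m, h, rfl, hm⟩]
  have hcol_eq_two : ∀ v z, hcolAux G r v z = 2 → v = r := by
    intro v z h
    unfold hcolAux at h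
    split_ifs at h with h1 h2
    · exact h2
    · exact absurd h (by decide)
    · exact absurd h (by decide)
  have hcol_ne_zero : ∀ v z, hcolAux G r v z ≠ 0 →
      ∃ w, G.Adj v w ∧ z = s(v, w) ∧ ∀ x, G.Adj v x → w ≤ x := by
    intro v z h
    unfold hcolAux at h
    by_cases h1 : ∃ w, G.Adj v w ∧ z = s(v, w) ∧ ∀ x, G.Adj v x → w ≤ x
    · exact h1
    · rw [if_neg h1] at h; exact absurd rfl h
  have hbcol_one : ∀ u p w, G.Adj u p → G.Adj u w → p ≠ w →
      (∀ x, G.Adj u x → ¬(p < x ∧ x < w) ∧ ¬(w < x ∧ x < p)) →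
      bcolAux G s(u, p) s(u, w) = 1 := by
    intro u p w h1 h2 h3 h4
    unfold bcolAux
    rw [if_pos ⟨u, p, w, h1, h2, rfl, rfl, h3, h4⟩]
  have hbcol_ne_zero : ∀ z z', bcolAux G z z' ≠ 0 →
      ∃ u w w', G.Adj u w ∧ G.Adj u w' ∧ z = s(u, w) ∧ z' = s(u, w') ∧ w ≠ w' ∧
        ∀ x, G.Adj u x → ¬(w < x ∧ x < w') ∧ ¬(w' < x ∧ x < w) := by
    intro z z' h
    unfold bcolAux at h
    by_cases h1 : ∃ u w w', G.Adj u w ∧ G.Adj u w' ∧ z = s(u, w) ∧ z' = s(u, w') ∧ w ≠ w' ∧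
        ∀ x, G.Adj u x → ¬(w < x ∧ x < w') ∧ ¬(w' < x ∧ x < w)
    · exact h1
    · rw [if_neg h1] at h; exact absurd rfl h
  -- the root is fixed
  have hσr : σ r = r := by
    obtain ⟨m, hm, hmin'⟩ := hmin r
    have h2 : hcolAux G r (σ r) ↑(τ ⟨s(r, m), G.mem_edgeSet.mpr hm⟩) = 2 := by
      rw [hA r ⟨s(r, m), G.mem_edgeSet.mpr hm⟩ (Sym2.mem_mk_left r m)]
      show hcolAux G r r s(r, m) = 2
      rw [hcol_min r m hm hmin', if_pos rfl]
    exact hcol_eq_two _ _ h2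
  -- propagation step
  have hstep : ∀ u : V, σ u = u → ∀ w : V, G.Adj u w → σ w = w := by
    intro u hu w
    induction w using WellFoundedLT.induction with
    | _ w IH =>
      intro hw
      have hτw : (↑(τ ⟨s(u, w), G.mem_edgeSet.mpr hw⟩) : Sym2 V) = s(u, σ w) := by
        rw [hστ u w _ rfl hw, hu]
      have hadj_uσw : G.Adj u (σ w) := by
        have hmem := (τ ⟨s(u, w), G.mem_edgeSet.mpr hw⟩).2
        rw [hτw] at hmem
        exact G.mem_edgeSet.mp hmem
      by_cases hwl : ∀ x, G.Adj u x → w ≤ x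
      · have h0 : hcolAux G r u s(u, w) ≠ 0 := by
          rw [hcol_min u w hw hwl]
          split_ifs <;> decide
        have h1 : hcolAux G r u ↑(τ ⟨s(u, w), G.mem_edgeSet.mpr hw⟩) ≠ 0 := by
          have hh := hA u ⟨s(u, w), G.mem_edgeSet.mpr hw⟩ (Sym2.mem_mk_left u w)
          rw [hu] at hh
          rw [hh]
          exact h0
        obtain ⟨w', hw'adj, hw'eq, hw'min⟩ := hcol_ne_zero _ _ h1
        rw [hτw] at hw'eq
        have hσww' : σ w = w' := Sym2.congr_right.mp hw'eq
        have hww' : w' = w := le_antisymm (hw'min w hw) (hwl w' hw'adj)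
        rw [hσww', hww']
      · push_neg at hwl
        obtain ⟨x₀, hx₀a, hx₀l⟩ := hwl
        obtain ⟨p, hp, hpmax⟩ := Finset.exists_max_image
          (Finset.univ.filter (fun x => G.Adj u x ∧ x < w)) id
          ⟨x₀, by simp [hx₀a, hx₀l]⟩
        simp only [Finset.mem_filter, Finset.mem_univ, true_and] at hp
        obtain ⟨hpa, hpw⟩ := hp
        have hσp : σ p = p := IH p hpw hpa
        have hupw : u ≠ p := G.ne_of_adj hpa
        have hb1 : bcolAux G s(u, p) s(u, w) = 1 := by
          refine hbcol_one u p w hpa hw (ne_of_lt hpw) ?_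
          intro x hx
          constructor
          · rintro ⟨hh1, hh2⟩
            have hxt : x ∈ Finset.univ.filter (fun x => G.Adj u x ∧ x < w) := by
              simp [hx, hh2]
            exact absurd (hpmax x hxt) (not_le.mpr hh1)
          · rintro ⟨hh1, hh2⟩
            exact absurd (hh2.trans hpw) (lt_asymm hh1)
        have hnef : (⟨s(u, p), G.mem_edgeSet.mpr hpa⟩ : G.edgeSet) ≠
            ⟨s(u, w), G.mem_edgeSet.mpr hw⟩ := by
          intro hh
          have : s(u, p) = s(u, w) := congrArg Subtype.val hh
          exact (ne_of_lt hpw) (Sym2.congr_right.mp this)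
        have hτp : (↑(τ ⟨s(u, p), G.mem_edgeSet.mpr hpa⟩) : Sym2 V) = s(u, p) := by
          rw [hστ u p _ rfl hpa, hu, hσp]
        have hb2 : bcolAux G s(u, p) s(u, σ w) = 1 := by
          have hh := hB ⟨s(u, p), G.mem_edgeSet.mpr hpa⟩ ⟨s(u, w), G.mem_edgeSet.mpr hw⟩
            hnef ⟨u, Sym2.mem_mk_left u p, Sym2.mem_mk_left u w⟩
          rw [hτp, hτw] at hh
          rw [hh]
          exact hb1
        obtain ⟨u₀, w₀, w₀', ha1, ha2, he1, he2, hne', hbet⟩ :=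
          hbcol_ne_zero _ _ (by rw [hb2]; decide)
        rcases Sym2.eq_iff.mp he1 with ⟨hh1, hh2⟩ | ⟨hh1, hh2⟩
        · -- u₀ = u, w₀ = p
          subst hh1; subst hh2
          rcases Sym2.eq_iff.mp he2 with ⟨-, hh4⟩ | ⟨hh3, hh4⟩
          · -- σ w = w₀'
            subst hh4
            rcases lt_trichotomy (σ w) w with hlt | heq | hgt
            · exfalso
              have hfix : σ (σ w) = σ w := IH (σ w) hlt hadj_uσw
              have hww : σ w = w := hσinj hfix
              rw [hww] at hlt
              exact lt_irrefl w hlt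
            · exact heq
            · exact absurd ⟨hpw, hgt⟩ ((hbet w hw).1)
          · -- u = w₀', σ w = u
            exfalso
            exact G.ne_of_adj hadj_uσw hh4.symm
        · -- u = w₀, p = u₀
          subst hh1; subst hh2
          rcases Sym2.eq_iff.mp he2 with ⟨hh3, -⟩ | ⟨-, hh4⟩
          · exact absurd hh3 hupw
          · exfalso
            have : σ w = σ p := by rw [hh4, hσp]
            have hwp := hσinj this
            rw [hwp] at hpw
            exact lt_irrefl p hpw
  -- all vertices are fixed
  have hwalkfix : ∀ {a b : V}, G.Walk a b → σ a = a → σ b = b := by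
    intro a b p
    induction p with
    | nil => exact id
    | cons h q ih => exact fun ha => ih (hstep _ ha _ h)
  have hfixall : ∀ v, σ v = v := fun v => hwalkfix ((hconn.preconnected r v).some) hσr
  -- conclude
  intro x
  rcases x with v | e
  · rw [hσ v, hfixall v]
  · rw [hτ e]
    congr 1
    apply Subtype.ext
    obtain ⟨z, hz⟩ := e
    induction z using Sym2.ind with
    | _ a b =>
      have hab : G.Adj a b := G.mem_edgeSet.mp hz
      have := hστ a b ⟨s(a, b), hz⟩ rfl hab
      rw [this, hfixall a, hfixall b]

end AuxStmt9

/-- For any connected graph `G` (of order `n ≥ 1`),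
`D'(M(G)) ≤ 3`. -/
theorem stmt_9 {V : Type*} [Fintype V] (G : SimpleGraph V)
    (hconn : G.Connected) (hn : 1 ≤ Fintype.card V) :
    distinguishingIndex (middleGraph G) ≤ 3 := by
  classical
  rcases eq_or_lt_of_le hn with h1 | h2
  · -- the graph has a single vertex and no edges
    have hsub : Subsingleton V := Fintype.card_le_one_iff_subsingleton.mp (by omega)
    have hE : IsEmpty G.edgeSet := by
      constructor
      rintro ⟨z, hz⟩
      induction z using Sym2.ind with
      | _ a b => exact (G.mem_edgeSet.mp hz).ne (Subsingleton.elim a b)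
    have hsub2 : Subsingleton (V ⊕ G.edgeSet) := by
      constructor
      rintro (a | e) (b | f)
      · exact congrArg _ (Subsingleton.elim a b)
      · exact hE.elim f
      · exact hE.elim e
      · exact hE.elim e
    exact Nat.sInf_le ⟨fun _ => 0, fun φ _ x => Subsingleton.elim _ _⟩
  · letI : LinearOrder V := LinearOrder.lift' (Fintype.equivFin V) (Equiv.injective _)
    have hne : Nonempty V := Fintype.card_pos_iff.mp (by omega)
    obtain ⟨c, hc⟩ := aux_main_stmt9 G hconn (by omega) hne.some
    exact Nat.sInf_le ⟨c, hc⟩
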